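/- For even n, the complete graph Kₙ admits a proper edge colouring with n − 1 colours. -/

import Mathlib

open SimpleGraph

variable {V : Type*} {W : Type*}

/-- The direct (tensor) product of two simple graphs. -/
def tensorProd (G : SimpleGraph V) (H : SimpleGraph W) : SimpleGraph (V × W) where
  Adj a b := G.Adj a.1 b.1 ∧ H.Adj a.2 b.2
  symm := ⟨fun _ _ h => ⟨h.1.symm, h.2.symm⟩⟩
  loopless := ⟨fun _ h => G.irrefl h.1⟩

instance tensorProd.adjDecidable (G : SimpleGraph V) (H : SimpleGraph W)
    [DecidableRel G.Adj] [DecidableRel H.Adj] : DecidableRel (tensorProd G H).Adj :=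
  fun a b => (instDecidableAnd : Decidable (G.Adj a.1 b.1 ∧ H.Adj a.2 b.2))

/-- A proper edge colouring with `n` colours, given as a symmetric function on adjacent pairs. -/
def IsEdgeColoring (G : SimpleGraph V) (n : ℕ) (ce : V → V → Fin n) : Prop :=
  (∀ u v, G.Adj u v → ce u v = ce v u) ∧
  (∀ u v w, G.Adj u v → G.Adj u w → v ≠ w → ce u v ≠ ce u w)

/-- A proper total colouring with `n` colours. -/
def IsTotalColoring (G : SimpleGraph V) (n : ℕ) (cv : V → Fin n) (ce : V → V → Fin n) : Prop :=
  (∀ u v, G.Adj u v → ce u v = ce v u) ∧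
  (∀ u v, G.Adj u v → cv u ≠ cv v) ∧
  (∀ u v w, G.Adj u v → G.Adj u w → v ≠ w → ce u v ≠ ce u w) ∧
  (∀ u v, G.Adj u v → ce u v ≠ cv u ∧ ce u v ≠ cv v)

/-- The total chromatic number of a graph. -/
noncomputable def totalChromaticNumber (G : SimpleGraph V) : ℕ :=
  sInf {n | ∃ cv ce, IsTotalColoring G n cv ce}

/-- Adjacency of the crown graph. -/
def crownAdj {m : ℕ} : Fin m ⊕ Fin m → Fin m ⊕ Fin m → Prop
  | Sum.inl k, Sum.inr t => k ≠ t
  | Sum.inr k, Sum.inl t => k ≠ t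
  | _, _ => False

/-- The crown graph `J_{2m}`: `K_{m,m}` minus a perfect matching. -/
def crown (m : ℕ) : SimpleGraph (Fin m ⊕ Fin m) where
  Adj := crownAdj
  symm := ⟨by rintro (k|k) (t|t) h <;> simp only [crownAdj] at * <;> exact fun e => h e.symm⟩
  loopless := ⟨by rintro (k|k) h <;> simp only [crownAdj] at h⟩

instance crown.adjDecidable (m : ℕ) : DecidableRel (crown m).Adj := fun a b =>
  match a, b with
  | Sum.inl k, Sum.inr t => (inferInstance : Decidable (k ≠ t))
  | Sum.inr k, Sum.inl t => (inferInstance : Decidable (k ≠ t))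
  | Sum.inl _, Sum.inl _ => isFalse (fun h => h)
  | Sum.inr _, Sum.inr _ => isFalse (fun h => h)

theorem Kn_edgeColoring_even (n : ℕ) (hn : Even n) :
    ∃ ce : Fin n → Fin n → Fin (n - 1),
      IsEdgeColoring (⊤ : SimpleGraph (Fin n)) (n - 1) ce := by
  rcases Nat.eq_zero_or_pos n with h0 | hpos
  · subst h0
    exact ⟨fun u => u.elim0, fun u => u.elim0, fun u => u.elim0⟩
  set m := n - 1 with hm
  have hmpos : 0 < m := by
    rcases hn with ⟨k, rfl⟩
    omega
  have hmodd : Odd m := Nat.Even.sub_odd hpos hn odd_one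
  -- 2 is a unit mod m
  have h2 : IsUnit (2 : ZMod m) := by
    rw [show (2 : ZMod m) = ((2 : ℕ) : ZMod m) by push_cast; ring]
    rw [ZMod.isUnit_iff_coprime]
    rw [Nat.coprime_comm]
    exact Nat.coprime_two_right.mpr hmodd
  have : NeZero m := ⟨hmpos.ne'⟩
  -- the colouring in ZMod m
  set c : Fin n → ZMod m := fun i => (i.val : ZMod m) with hc
  set cz : Fin n → Fin n → ZMod m := fun u v =>
    if u.val = m then 2 * c v else if v.val = m then 2 * c u else c u + c v with hcz
  -- injectivity of c on non-special vertices
  have hinj : ∀ u v : Fin n, u.val ≠ m → v.val ≠ m → c u = c v → u = v := by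
    intro u v hu hv h
    have hu' : u.val < m := by omega
    have hv' : v.val < m := by omega
    have := congrArg ZMod.val h
    rw [hc] at this
    simp only [ZMod.val_natCast_of_lt hu', ZMod.val_natCast_of_lt hv'] at this
    exact Fin.ext this
  have key : ∀ u v w : Fin n, u ≠ v → u ≠ w → v ≠ w → cz u v ≠ cz u w := by
    intro u v w huv huw hvw heq
    have hvw' : v.val ≠ w.val := fun h => hvw (Fin.ext h)
    have huv' : u.val ≠ v.val := fun h => huv (Fin.ext h)
    have huw' : u.val ≠ w.val := fun h => huw (Fin.ext h)
    simp only [hcz] at heq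
    by_cases hu : u.val = m
    · simp only [hu, if_pos rfl] at heq
      exact hvw (hinj v w (by omega) (by omega) (h2.mul_left_cancel heq))
    · simp only [if_neg hu] at heq
      by_cases hv : v.val = m
      · have hw : w.val ≠ m := by omega
        simp only [if_pos hv, if_neg hw] at heq
        -- 2 * c u = c u + c w
        have : c u = c w := by
          have : c u + c u = c u + c w := by rw [← heq]; ring
          exact add_left_cancel this
        exact huw (hinj u w hu hw this)
      · simp only [if_neg hv] at heq
        by_cases hw : w.val = m
        · simp only [if_pos hw] at heq
          have : c u = c v := by
            have : c u + c v = c u + c u := by rw [heq]; ring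
            exact (add_left_cancel this).symm
          exact huv (hinj u v hu hv this)
        · simp only [if_neg hw] at heq
          exact hvw (hinj v w hv hw (add_left_cancel heq))
  have hsymm : ∀ u v : Fin n, u ≠ v → cz u v = cz v u := by
    intro u v huv
    have huv' : u.val ≠ v.val := fun h => huv (Fin.ext h)
    simp only [hcz]
    by_cases hu : u.val = m
    · have hv : v.val ≠ m := by omega
      simp [hu, hv]
    · by_cases hv : v.val = m
      · simp [hu, hv]
      · simp [hu, hv, add_comm]
  refine ⟨fun u v => ⟨(cz u v).val, ZMod.val_lt _⟩, ?_, ?_⟩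
  · intro u v huv
    rw [SimpleGraph.top_adj] at huv
    exact Fin.ext (congrArg ZMod.val (hsymm u v huv))
  · intro u v w huv huw hvw heq
    rw [SimpleGraph.top_adj] at huv huw
    have : cz u v = cz u w := ZMod.val_injective _ (congrArg Fin.val heq)
    exact key u v w huv huw hvw this
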